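/- Uniform pointwise estimate for weighted Bergman functions on the upper half-plane: for p ≥ 1 and ν > -1 there is a constant C such that every holomorphic F on ℂ₊ satisfies |F(z)| ≤ C (Im z)^{-(ν+2)/p} ‖F‖_{A^p_ν} for all z ∈ ℂ₊, where ‖F‖_{A^p_ν}^p = ∫_{ℂ₊} |F(w)|^p (Im w)^ν dA(w). -/

import Mathlib

open MeasureTheory Complex ENNReal Metric Set

/-- Circle sub-mean-value inequality for holomorphic functions. -/
lemma circle_mean (F : ℂ → ℂ) (c : ℂ) (ρ : ℝ) (hρ : 0 < ρ)
    (hd : DifferentiableOn ℂ F (closedBall c ρ)) :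
    2 * Real.pi * ‖F c‖ ≤ ∫ θ in (0:ℝ)..(2*Real.pi), ‖F (circleMap c ρ θ)‖ := by
  have h := hd.circleIntegral_sub_inv_smul (Metric.mem_ball_self hρ)
  rw [circleIntegral] at h
  have hint : ∀ θ : ℝ, deriv (circleMap c ρ) θ •
      ((circleMap c ρ θ - c)⁻¹ • F (circleMap c ρ θ)) = I * F (circleMap c ρ θ) := by
    intro θ
    rw [deriv_circleMap, circleMap_sub_center, smul_eq_mul, smul_eq_mul]
    have hne : circleMap 0 ρ θ ≠ 0 := circleMap_ne_center hρ.ne'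
    field_simp
  simp only [hint] at h
  rw [intervalIntegral.integral_const_mul] at h
  have h2 : (∫ θ in (0:ℝ)..(2*Real.pi), F (circleMap c ρ θ)) = (2 * Real.pi : ℂ) * F c := by
    have := h
    apply mul_left_cancel₀ I_ne_zero
    rw [this, smul_eq_mul]
    ring
  have h3 : ‖(2 * Real.pi : ℂ) * F c‖ = 2 * Real.pi * ‖F c‖ := by
    rw [norm_mul]
    congr 1
    simpa using Complex.norm_of_nonneg (by positivity : (0:ℝ) ≤ 2 * Real.pi)
  calc 2 * Real.pi * ‖F c‖ = ‖∫ θ in (0:ℝ)..(2*Real.pi), F (circleMap c ρ θ)‖ := by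
        rw [h2, h3]
    _ ≤ ∫ θ in (0:ℝ)..(2*Real.pi), ‖F (circleMap c ρ θ)‖ :=
        intervalIntegral.norm_integral_le_integral_norm (by positivity)

/-- Areal sub-mean-value inequality for holomorphic functions. -/
lemma area_mean (F : ℂ → ℂ) (c : ℂ) (r : ℝ) (hr : 0 < r)
    (hd : DifferentiableOn ℂ F (closedBall c r)) :
    Real.pi * r ^ 2 * ‖F c‖ ≤ ∫ z in ball c r, ‖F z‖ := by
  set g : ℂ → ℝ := fun z => ‖F z‖ with hg
  have hcont : ContinuousOn g (closedBall c r) := hd.continuousOn.norm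
  -- explicit polar map
  set e : ℝ × ℝ → ℂ := fun p => c + p.1 * (Real.cos p.2 + Real.sin p.2 * I) with he
  have he_eq : ∀ p : ℝ × ℝ, c + Complex.polarCoord.symm p = e p := by
    intro p; rw [Complex.polarCoord_symm_apply]
  have he_circle : ∀ ρ θ : ℝ, e (ρ, θ) = circleMap c ρ θ := by
    intro ρ θ
    simp only [he, circleMap, Complex.exp_mul_I, ← Complex.ofReal_cos, ← Complex.ofReal_sin]
  have he_cont : Continuous e := by
    apply Continuous.add continuous_const
    exact (Complex.continuous_ofReal.comp continuous_fst).mul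
      (((Complex.continuous_ofReal.comp (Real.continuous_cos.comp continuous_snd))).add
        ((Complex.continuous_ofReal.comp (Real.continuous_sin.comp continuous_snd)).mul
          continuous_const))
  have he_mem : ∀ p : ℝ × ℝ, |p.1| ≤ r → e p ∈ closedBall c r := by
    intro p hp
    rw [mem_closedBall, dist_eq_norm]
    have h0 : e p - c = (p.1 : ℂ) * (Real.cos p.2 + Real.sin p.2 * I) := by
      simp only [he]; ring
    rw [h0, norm_mul, Complex.norm_real, Real.norm_eq_abs,
      Complex.ofReal_cos, Complex.ofReal_sin, Complex.norm_cos_add_sin_mul_I, mul_one]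
    exact hp
  -- step A : translation
  have stepA : ∫ z in ball c r, g z = ∫ z in ball (0:ℂ) r, g (c + z) := by
    rw [← integral_indicator measurableSet_ball, ← integral_indicator measurableSet_ball]
    rw [← integral_add_left_eq_self (fun z => (ball c r).indicator g z) c]
    congr 1
    funext z
    simp only [indicator]
    have : c + z ∈ ball c r ↔ z ∈ ball (0:ℂ) r := by
      simp [mem_ball, dist_eq_norm]
    by_cases h : z ∈ ball (0:ℂ) r
    · rw [if_pos (this.2 h), if_pos h]
    · rw [if_neg (fun hh => h (this.1 hh)), if_neg h]
  -- step B : polar coordinates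
  set S : Set (ℝ × ℝ) := Ioo 0 r ×ˢ Ioo (-Real.pi) Real.pi with hS
  have stepB : ∫ z in ball (0:ℂ) r, g (c + z) = ∫ p in S, p.1 * g (e p) := by
    have hTS : Complex.polarCoord.target ∩ (Iio r ×ˢ univ) = S := by
      rw [Complex.polarCoord_target, Set.prod_inter_prod, Set.inter_univ, Set.Ioi_inter_Iio]
    rw [← integral_indicator measurableSet_ball,
      ← Complex.integral_comp_polarCoord_symm (fun z => (ball (0:ℂ) r).indicator (fun z => g (c + z)) z),
      ← hTS, ← setIntegral_indicator (measurableSet_Iio.prod MeasurableSet.univ)]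
    apply setIntegral_congr_fun (Complex.polarCoord.open_target.measurableSet)
    intro p hp
    rw [Complex.polarCoord_target] at hp
    have hp1 : 0 < p.1 := hp.1
    have hmem : Complex.polarCoord.symm p ∈ ball (0:ℂ) r ↔ p.1 < r := by
      rw [mem_ball_zero_iff, Complex.norm_polarCoord_symm,
        abs_of_pos hp1]
    simp only [indicator, mem_prod, mem_Iio, mem_univ, and_true, smul_eq_mul]
    by_cases h : p.1 < r
    · rw [if_pos (hmem.2 h), if_pos h, he_eq]
    · rw [if_neg (fun hh => h (hmem.1 hh)), if_neg h, mul_zero]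
  -- integrability on S
  have hK : IsCompact (Icc (0:ℝ) r ×ˢ Icc (-Real.pi) Real.pi) :=
    isCompact_Icc.prod isCompact_Icc
  have hSsub : S ⊆ Icc (0:ℝ) r ×ˢ Icc (-Real.pi) Real.pi :=
    Set.prod_mono Ioo_subset_Icc_self Ioo_subset_Icc_self
  have hcontK : ContinuousOn (fun p : ℝ × ℝ => p.1 * g (e p))
      (Icc (0:ℝ) r ×ˢ Icc (-Real.pi) Real.pi) := by
    apply ContinuousOn.mul (continuous_fst.continuousOn)
    apply hcont.comp he_cont.continuousOn
    intro p hp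
    exact he_mem p (by
      rcases hp with ⟨h1, _⟩
      rw [abs_le]; exact ⟨le_trans (by linarith [hr]) h1.1, h1.2⟩)
  have hSint : IntegrableOn (fun p : ℝ × ℝ => p.1 * g (e p)) S := by
    exact (hcontK.integrableOn_compact hK).mono_set hSsub
  -- step D : Fubini
  have stepD : ∫ p in S, p.1 * g (e p) =
      ∫ ρ in Ioo (0:ℝ) r, ∫ θ in Ioo (-Real.pi) Real.pi, ρ * g (e (ρ, θ)) := by
    rw [hS, Measure.volume_eq_prod]
    exact setIntegral_prod _ (by rw [← Measure.volume_eq_prod]; exact hSint)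
  -- inner bound
  have inner_bound : ∀ ρ ∈ Ioo (0:ℝ) r,
      2 * Real.pi * ‖F c‖ * ρ ≤ ∫ θ in Ioo (-Real.pi) Real.pi, ρ * g (e (ρ, θ)) := by
    intro ρ hρ
    have h1 : ∫ θ in Ioo (-Real.pi) Real.pi, ρ * g (e (ρ, θ))
        = ρ * ∫ θ in (-Real.pi)..Real.pi, g (circleMap c ρ θ) := by
      rw [intervalIntegral.integral_of_le (by linarith [Real.pi_pos]),
        ← integral_Ioc_eq_integral_Ioo, ← integral_const_mul]
      congr 1; funext θ; rw [he_circle]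
    have hper : Function.Periodic (fun θ => g (circleMap c ρ θ)) (2 * Real.pi) := by
      intro θ; simp [hg, periodic_circleMap c ρ θ]
    have h2 : ∫ θ in (-Real.pi)..Real.pi, g (circleMap c ρ θ)
        = ∫ θ in (0:ℝ)..(2*Real.pi), g (circleMap c ρ θ) := by
      have := hper.intervalIntegral_add_eq (-Real.pi) 0
      rw [zero_add] at this
      rw [show -Real.pi + 2 * Real.pi = Real.pi by ring] at this
      exact this
    have h3 := circle_mean F c ρ hρ.1
      (hd.mono (closedBall_subset_closedBall hρ.2.le))
    rw [h1, h2]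
    calc 2 * Real.pi * ‖F c‖ * ρ = ρ * (2 * Real.pi * ‖F c‖) := by ring
      _ ≤ ρ * ∫ θ in (0:ℝ)..(2*Real.pi), g (circleMap c ρ θ) := by
          apply mul_le_mul_of_nonneg_left h3 hρ.1.le
  -- outer integrability
  have houter : IntegrableOn (fun ρ => ∫ θ in Ioo (-Real.pi) Real.pi, ρ * g (e (ρ, θ)))
      (Ioo (0:ℝ) r) := by
    have h := hSint
    rw [hS, IntegrableOn, Measure.volume_eq_prod, ← Measure.prod_restrict] at h
    exact h.integral_prod_left
  -- combine
  have final : ∫ ρ in Ioo (0:ℝ) r, 2 * Real.pi * ‖F c‖ * ρ ≤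
      ∫ ρ in Ioo (0:ℝ) r, ∫ θ in Ioo (-Real.pi) Real.pi, ρ * g (e (ρ, θ)) := by
    apply setIntegral_mono_on _ houter measurableSet_Ioo inner_bound
    exact (continuous_const.mul continuous_id).continuousOn.integrableOn_compact isCompact_Icc
      |>.mono_set Ioo_subset_Icc_self
  have lhs_eq : ∫ ρ in Ioo (0:ℝ) r, 2 * Real.pi * ‖F c‖ * ρ
      = Real.pi * r ^ 2 * ‖F c‖ := by
    rw [integral_const_mul, ← integral_Ioc_eq_integral_Ioo,
      ← intervalIntegral.integral_of_le hr.le, integral_id]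
    ring
  calc Real.pi * r ^ 2 * ‖F c‖ = ∫ ρ in Ioo (0:ℝ) r, 2 * Real.pi * ‖F c‖ * ρ := lhs_eq.symm
    _ ≤ ∫ ρ in Ioo (0:ℝ) r, ∫ θ in Ioo (-Real.pi) Real.pi, ρ * g (e (ρ, θ)) := final
    _ = ∫ p in S, p.1 * g (e p) := stepD.symm
    _ = ∫ z in ball (0:ℂ) r, g (c + z) := stepB.symm
    _ = ∫ z in ball c r, g z := stepA.symm

/-- Uniform pointwise estimate for weighted Bergman functions on the upper half-plane:
for `p ≥ 1`, `ν > -1` there is `C > 0` so that every holomorphic `F` on `ℂ₊` satisfies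
`|F z| ≤ C (Im z)^{-(ν+2)/p} ‖F‖_{A^p_ν}` for all `z ∈ ℂ₊`. -/
theorem bergman_pointwise_estimate (p ν : ℝ) (hp : 1 ≤ p) (hν : -1 < ν) :
    ∃ C : ℝ, 0 < C ∧ ∀ F : ℂ → ℂ, DifferentiableOn ℂ F {z : ℂ | 0 < z.im} →
      ∀ z : ℂ, 0 < z.im →
        ENNReal.ofReal (‖F z‖) ≤
          ENNReal.ofReal (C * z.im ^ (-(ν + 2) / p)) *
            (∫⁻ w in {w : ℂ | 0 < w.im},
              ENNReal.ofReal (‖F w‖ ^ p * w.im ^ ν)) ^ (1 / p) := by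
  have hp0 : 0 < p := lt_of_lt_of_le one_pos hp
  set m : ℝ := min ((1/2:ℝ) ^ ν) ((3/2:ℝ) ^ ν) with hm
  have hm_pos : 0 < m := lt_min (Real.rpow_pos_of_pos (by norm_num) ν)
    (Real.rpow_pos_of_pos (by norm_num) ν)
  refine ⟨(Real.pi/4) ^ (-(1/p)) * m ^ (-(1/p)), by
    have h1 := Real.rpow_pos_of_pos (show (0:ℝ) < Real.pi/4 by positivity) (-(1/p))
    have h2 := Real.rpow_pos_of_pos hm_pos (-(1/p))
    positivity, ?_⟩
  intro F hF z hz
  set t := z.im with ht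
  have hr : 0 < t/2 := by linarith
  have him : ∀ w ∈ closedBall z (t/2), t/2 ≤ w.im ∧ w.im ≤ 3*t/2 := by
    intro w hw
    have h2 : |(w - z).im| ≤ ‖w - z‖ := Complex.abs_im_le_norm _
    rw [Complex.sub_im] at h2
    have h1 : |w.im - t| ≤ t/2 := by
      calc |w.im - t| ≤ ‖w - z‖ := h2
        _ ≤ t/2 := by rwa [← Complex.dist_eq, ← mem_closedBall]
    rw [abs_le] at h1
    constructor <;> linarith [h1.1, h1.2]
  have hBsub : ball z (t/2) ⊆ {w : ℂ | 0 < w.im} := by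
    intro w hw
    exact lt_of_lt_of_le hr (him w (ball_subset_closedBall hw)).1
  have hweight : ∀ w ∈ ball z (t/2), m * t ^ ν ≤ w.im ^ ν := by
    intro w hw
    obtain ⟨h1, h2⟩ := him w (ball_subset_closedBall hw)
    have hw0 : 0 < w.im := lt_of_lt_of_le hr h1
    rcases le_or_gt 0 ν with hν0 | hν0
    · calc m * t ^ ν ≤ (1/2:ℝ)^ν * t ^ ν :=
          mul_le_mul_of_nonneg_right (min_le_left _ _) (Real.rpow_nonneg hz.le ν)
        _ = (t/2) ^ ν := by rw [← Real.mul_rpow (by norm_num) hz.le]; congr 1; ring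
        _ ≤ w.im ^ ν := Real.rpow_le_rpow hr.le h1 hν0
    · calc m * t ^ ν ≤ (3/2:ℝ)^ν * t ^ ν :=
          mul_le_mul_of_nonneg_right (min_le_right _ _) (Real.rpow_nonneg hz.le ν)
        _ = (3*t/2) ^ ν := by rw [← Real.mul_rpow (by norm_num) hz.le]; congr 1; ring
        _ ≤ w.im ^ ν := Real.rpow_le_rpow_of_nonpos hw0 h2 hν0.le
  have hmt : 0 < m * t ^ ν := mul_pos hm_pos (Real.rpow_pos_of_pos hz ν)
  have hdB : DifferentiableOn ℂ F (closedBall z (t/2)) :=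
    hF.mono (fun w hw => lt_of_lt_of_le hr (him w hw).1)
  have harea := area_mean F z (t/2) hr hdB
  have hInt : IntegrableOn (fun w => ‖F w‖) (ball z (t/2)) :=
    ((hdB.continuousOn.norm).integrableOn_compact (isCompact_closedBall _ _)).mono_set
      ball_subset_closedBall
  set μB := volume.restrict (ball z (t/2)) with hμB
  have haes : AEStronglyMeasurable F μB :=
    ContinuousOn.aestronglyMeasurable (hdB.continuousOn.mono ball_subset_closedBall)
      measurableSet_ball
  set A := ∫⁻ w in {w : ℂ | 0 < w.im}, ENNReal.ofReal (‖F w‖ ^ p * w.im ^ ν)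
    with hA
  have s1 : ENNReal.ofReal (Real.pi * (t/2) ^ 2 * ‖F z‖) ≤ eLpNorm F 1 μB := by
    rw [eLpNorm_one_eq_lintegral_enorm]
    calc ENNReal.ofReal (Real.pi * (t/2)^2 * ‖F z‖)
        ≤ ENNReal.ofReal (∫ w in ball z (t/2), ‖F w‖) := ENNReal.ofReal_le_ofReal harea
      _ = ∫⁻ w in ball z (t/2), ENNReal.ofReal ‖F w‖ :=
          ofReal_integral_eq_lintegral_ofReal hInt (ae_of_all _ fun w => norm_nonneg _)
      _ = ∫⁻ w, ‖F w‖ₑ ∂μB := by simp_rw [ofReal_norm_eq_enorm]; rfl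
  set q : ENNReal := ENNReal.ofReal p with hqdef
  have hq0 : q ≠ 0 := (ENNReal.ofReal_pos.2 hp0).ne'
  have hqt : q ≠ ⊤ := ENNReal.ofReal_ne_top
  have hqr : q.toReal = p := ENNReal.toReal_ofReal hp0.le
  have h1q : (1:ENNReal) ≤ q := by
    rw [← ENNReal.ofReal_one]; exact ENNReal.ofReal_le_ofReal hp
  have s2 : eLpNorm F 1 μB ≤ eLpNorm F q μB * (volume (ball z (t/2))) ^ (1 - 1/p) := by
    have h := eLpNorm_le_eLpNorm_mul_rpow_measure_univ (μ := μB) h1q haes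
    rw [ENNReal.toReal_one, hqr, Measure.restrict_apply_univ,
      show (1:ℝ)/1 - 1/p = 1 - 1/p by norm_num] at h
    exact h
  have s3 : eLpNorm F q μB = (∫⁻ w, (‖F w‖₊ : ENNReal) ^ p ∂μB) ^ (1/p) := by
    rw [eLpNorm_eq_lintegral_rpow_enorm_toReal hq0 hqt, hqr]; rfl
  have s4 : (∫⁻ w, (‖F w‖₊ : ENNReal) ^ p ∂μB) ≤ ENNReal.ofReal ((m * t ^ ν)⁻¹) * A := by
    have key : ∀ᵐ w ∂μB, (‖F w‖₊ : ENNReal) ^ p ≤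
        ENNReal.ofReal ((m * t ^ ν)⁻¹) * ENNReal.ofReal (‖F w‖ ^ p * w.im ^ ν) := by
      rw [hμB, ae_restrict_iff' measurableSet_ball]
      refine ae_of_all _ fun w hw => ?_
      have h1 : (‖F w‖₊ : ENNReal) ^ p = ENNReal.ofReal (‖F w‖ ^ p) := by
        rw [← enorm_eq_nnnorm, ← ofReal_norm_eq_enorm,
          ← ENNReal.ofReal_rpow_of_nonneg (norm_nonneg _) hp0.le]
      rw [h1, ← ENNReal.ofReal_mul (by positivity)]
      apply ENNReal.ofReal_le_ofReal
      have hw2 := hweight w hw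
      have habs : (0:ℝ) ≤ ‖F w‖ ^ p := Real.rpow_nonneg (norm_nonneg _) p
      calc ‖F w‖ ^ p
          = (m * t ^ ν)⁻¹ * (‖F w‖ ^ p * (m * t ^ ν)) := by field_simp
        _ ≤ (m * t ^ ν)⁻¹ * (‖F w‖ ^ p * w.im ^ ν) :=
            mul_le_mul_of_nonneg_left (mul_le_mul_of_nonneg_left hw2 habs) (by positivity)
    calc (∫⁻ w, (‖F w‖₊ : ENNReal) ^ p ∂μB)
        ≤ ∫⁻ w, ENNReal.ofReal ((m * t ^ ν)⁻¹) *
            ENNReal.ofReal (‖F w‖ ^ p * w.im ^ ν) ∂μB := lintegral_mono_ae key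
      _ = ENNReal.ofReal ((m * t ^ ν)⁻¹) *
            ∫⁻ w, ENNReal.ofReal (‖F w‖ ^ p * w.im ^ ν) ∂μB :=
          lintegral_const_mul' _ _ ENNReal.ofReal_ne_top
      _ ≤ ENNReal.ofReal ((m * t ^ ν)⁻¹) * A :=
          mul_le_mul_right (lintegral_mono_set hBsub) _
  have main : ENNReal.ofReal (Real.pi * (t/2) ^ 2) * ENNReal.ofReal ‖F z‖ ≤
      (ENNReal.ofReal ((m * t ^ ν)⁻¹)) ^ (1/p) * A ^ (1/p) *
        (volume (ball z (t/2))) ^ (1 - 1/p) := by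
    calc ENNReal.ofReal (Real.pi * (t/2) ^ 2) * ENNReal.ofReal ‖F z‖
        = ENNReal.ofReal (Real.pi * (t/2) ^ 2 * ‖F z‖) :=
          (ENNReal.ofReal_mul (by positivity)).symm
      _ ≤ eLpNorm F 1 μB := s1
      _ ≤ eLpNorm F q μB * (volume (ball z (t/2))) ^ (1 - 1/p) := s2
      _ ≤ ((ENNReal.ofReal ((m * t ^ ν)⁻¹)) * A) ^ (1/p) *
            (volume (ball z (t/2))) ^ (1 - 1/p) := by
          apply mul_le_mul_left
          rw [s3]
          exact ENNReal.rpow_le_rpow s4 (by positivity)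
      _ = _ := by rw [ENNReal.mul_rpow_of_nonneg _ _ (by positivity)]
  have hD0 : ENNReal.ofReal (Real.pi * (t/2) ^ 2) ≠ 0 :=
    (ENNReal.ofReal_pos.2 (by positivity)).ne'
  have main2 : ENNReal.ofReal ‖F z‖ ≤ (ENNReal.ofReal (Real.pi * (t/2) ^ 2))⁻¹ *
      ((ENNReal.ofReal ((m * t ^ ν)⁻¹)) ^ (1/p) * A ^ (1/p) *
        (volume (ball z (t/2))) ^ (1 - 1/p)) := by
    rw [← one_mul (ENNReal.ofReal ‖F z‖),
      ← ENNReal.inv_mul_cancel hD0 ENNReal.ofReal_ne_top, mul_assoc]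
    exact mul_le_mul_right main _
  -- compute the constant
  have hreal : (Real.pi * (t/2)^2)⁻¹ * (((m * t ^ ν)⁻¹) ^ (1/p) * (Real.pi * (t/2)^2) ^ (1 - 1/p))
      = (Real.pi/4) ^ (-(1/p)) * m ^ (-(1/p)) * t ^ (-(ν + 2) / p) := by
    have ha : (0:ℝ) < Real.pi * (t/2)^2 := by positivity
    have e1 : (Real.pi * (t/2)^2)⁻¹ * (Real.pi * (t/2)^2) ^ (1 - 1/p)
        = (Real.pi * (t/2)^2) ^ (-(1/p)) := by
      rw [← Real.rpow_neg_one (Real.pi * (t/2)^2), ← Real.rpow_add ha,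
        show (-1:ℝ) + (1 - 1/p) = -(1/p) by ring]
    have e2 : ((m * t ^ ν)⁻¹) ^ (1/p) = m ^ (-(1/p)) * t ^ (ν * -(1/p)) := by
      rw [Real.inv_rpow hmt.le, ← Real.rpow_neg hmt.le,
        Real.mul_rpow hm_pos.le (Real.rpow_nonneg hz.le ν), ← Real.rpow_mul hz.le]
    have e3 : (Real.pi * (t/2)^2) ^ (-(1/p)) = (Real.pi/4) ^ (-(1/p)) * t ^ (2 * -(1/p)) := by
      rw [show Real.pi * (t/2)^2 = (Real.pi/4) * t^(2:ℕ) by ring,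
        Real.mul_rpow (by positivity) (by positivity), ← Real.rpow_natCast t 2,
        ← Real.rpow_mul hz.le]
      norm_num
    calc (Real.pi * (t/2)^2)⁻¹ * (((m * t ^ ν)⁻¹) ^ (1/p) * (Real.pi * (t/2)^2) ^ (1 - 1/p))
        = ((m * t ^ ν)⁻¹) ^ (1/p) * ((Real.pi * (t/2)^2)⁻¹ * (Real.pi * (t/2)^2) ^ (1 - 1/p)) := by
          ring
      _ = (m ^ (-(1/p)) * t ^ (ν * -(1/p))) * ((Real.pi/4) ^ (-(1/p)) * t ^ (2 * -(1/p))) := by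
          rw [e1, e2, e3]
      _ = (Real.pi/4) ^ (-(1/p)) * m ^ (-(1/p)) * (t ^ (ν * -(1/p)) * t ^ (2 * -(1/p))) := by
          ring
      _ = (Real.pi/4) ^ (-(1/p)) * m ^ (-(1/p)) * t ^ (-(ν + 2) / p) := by
          rw [← Real.rpow_add hz, show ν * -(1/p) + 2 * -(1/p) = -(ν + 2) / p by ring]
  have hconst : (ENNReal.ofReal (Real.pi * (t/2) ^ 2))⁻¹ *
      ((ENNReal.ofReal ((m * t ^ ν)⁻¹)) ^ (1/p) * A ^ (1/p) *
        (volume (ball z (t/2))) ^ (1 - 1/p))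
      = ENNReal.ofReal ((Real.pi/4) ^ (-(1/p)) * m ^ (-(1/p)) * t ^ (-(ν + 2) / p)) *
          A ^ (1/p) := by
    have hπ : ((NNReal.pi : ENNReal)) = ENNReal.ofReal Real.pi := by
      rw [← NNReal.coe_real_pi, ENNReal.ofReal_coe_nnreal]
    have hvol : volume (ball z (t/2)) = ENNReal.ofReal (Real.pi * (t/2)^2) := by
      rw [Complex.volume_ball, hπ, ← ENNReal.ofReal_pow hr.le,
        ← ENNReal.ofReal_mul (by positivity), mul_comm]
    rw [hvol, ENNReal.ofReal_rpow_of_pos (by positivity),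
      ENNReal.ofReal_rpow_of_pos (by positivity),
      ← ENNReal.ofReal_inv_of_pos (by positivity)]
    rw [show (ENNReal.ofReal ((Real.pi * (t/2)^2)⁻¹)) *
        (ENNReal.ofReal (((m * t ^ ν)⁻¹) ^ (1/p)) * A ^ (1/p) *
          ENNReal.ofReal ((Real.pi * (t/2)^2) ^ (1 - 1/p)))
      = (ENNReal.ofReal ((Real.pi * (t/2)^2)⁻¹) * (ENNReal.ofReal (((m * t ^ ν)⁻¹) ^ (1/p)) *
          ENNReal.ofReal ((Real.pi * (t/2)^2) ^ (1 - 1/p)))) * A ^ (1/p) by ring]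
    congr 1
    rw [← ENNReal.ofReal_mul (by positivity), ← ENNReal.ofReal_mul (by positivity), hreal]
  calc ENNReal.ofReal (‖F z‖) = ENNReal.ofReal ‖F z‖ := by
        rfl
    _ ≤ _ := main2
    _ = _ := by rw [hconst]
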